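/- Let ζ be a nonzero real number, Q the supercharge with parameter ζ, λ a nonzero complex number, and let (A_L)_{L≥1} be a family of linear operators A_L : V^L → V^L satisfying A_{L+1} Q = λ Q A_L for all L. Let L ≥ 2 and let Ψ ∈ W^L satisfy QΨ = 0 and Q†Ψ = 0, and suppose Ψ = Φ + Qα with QΦ = 0 and α ∈ W^{L−1}, and Ψ = Φ' + Q†β with Q†Φ' = 0 and β ∈ W^{L+1}. Then ⟨Ψ | A_L Ψ⟩ = ⟨Φ' | A_L Φ⟩. -/

import Mathlib

open scoped BigOperators

noncomputable section

namespace EightVertex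

/-- Spin configurations of a chain of length `L`: `0` is spin up, `1` is spin down. -/
abbrev Cfg (L : ℕ) := Fin L → Fin 2

/-- The Hilbert space `V^L = (ℂ²)^{⊗L}`, with its canonical orthonormal basis indexed
by spin configurations and the standard Hermitian inner product (conjugate-linear in
the first argument). -/
abbrev V (L : ℕ) := EuclideanSpace ℂ (Cfg L)

/-- The canonical basis state `|s₁ ⋯ s_L⟩`. -/
def bs {L : ℕ} (s : Cfg L) : V L := EuclideanSpace.single s 1

/-- The all-spins-up basis state `|↑⋯↑⟩`. -/
def allUp (L : ℕ) : V L := bs (fun _ => 0)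

/-- Cyclic successor on `Fin L`. -/
def cyc {L : ℕ} (j : Fin L) : Fin L := ⟨((j : ℕ) + 1) % L, Nat.mod_lt _ j.pos⟩

/-- Matrix of the translation operator `S`: `S|s₁⋯s_L⟩ = |s_L s₁ ⋯ s_{L-1}⟩`. -/
def Smat (L : ℕ) : Matrix (Cfg L) (Cfg L) ℂ :=
  fun s' s => if (∀ j, s' (cyc j) = s j) then 1 else 0

/-- The translation operator `S` on `V^L`. -/
def Sop (L : ℕ) : V L →ₗ[ℂ] V L := Matrix.toEuclideanLin (Smat L)

/-- The subspace `W^L ⊆ V^L` of alternate-cyclic states: the eigenspace of the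
translation operator with eigenvalue `(-1)^{L+1}`. -/
def W (L : ℕ) : Submodule ℂ (V L) :=
  Module.End.eigenspace (Sop L : Module.End ℂ (V L)) ((-1 : ℂ) ^ (L + 1))

def sigmaX : Matrix (Fin 2) (Fin 2) ℂ := !![0, 1; 1, 0]
def sigmaY : Matrix (Fin 2) (Fin 2) ℂ := !![0, -Complex.I; Complex.I, 0]
def sigmaZ : Matrix (Fin 2) (Fin 2) ℂ := !![1, 0; 0, -1]

/-- The one-site operator `A_j` acting on site `j` of the chain. -/
def site {L : ℕ} (A : Matrix (Fin 2) (Fin 2) ℂ) (j : Fin L) : Matrix (Cfg L) (Cfg L) ℂ :=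
  fun s' s => A (s' j) (s j) * ∏ k ∈ Finset.univ.erase j, (if s' k = s k then (1 : ℂ) else 0)

/-- Matrix of the periodic XYZ Hamiltonian
`H = -(1/2) ∑_j (Jx σ^x_j σ^x_{j+1} + Jy σ^y_j σ^y_{j+1} + Jz σ^z_j σ^z_{j+1})`. -/
def HxyzMat (Jx Jy Jz : ℝ) (L : ℕ) : Matrix (Cfg L) (Cfg L) ℂ :=
  (-(1/2) : ℂ) • ∑ j : Fin L,
    ((Jx : ℂ) • (site sigmaX j * site sigmaX (cyc j)) +
     (Jy : ℂ) • (site sigmaY j * site sigmaY (cyc j)) +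
     (Jz : ℂ) • (site sigmaZ j * site sigmaZ (cyc j)))

/-- The periodic XYZ Hamiltonian on `V^L`. -/
def Hxyz (Jx Jy Jz : ℝ) (L : ℕ) : V L →ₗ[ℂ] V L := Matrix.toEuclideanLin (HxyzMat Jx Jy Jz L)

/-- The XYZ Hamiltonian with the supersymmetric anisotropy parameters
`Jx = 1+ζ`, `Jy = 1-ζ`, `Jz = (ζ²-1)/2`. -/
def HxyzSusy (ζ : ℝ) (L : ℕ) : V L →ₗ[ℂ] V L :=
  Hxyz (1 + ζ) (1 - ζ) ((ζ ^ 2 - 1) / 2) L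

/-- The ground-state energy `E₀ = -(2n+1)(3+ζ²)/4`. -/
def E0 (n : ℕ) (ζ : ℝ) : ℝ := -(2 * (n : ℝ) + 1) * (3 + ζ ^ 2) / 4

/-- Matrix of the spin-parity operator `P = (-1)^L σ^z_1 ⋯ σ^z_L`. -/
def Pmat (L : ℕ) : Matrix (Cfg L) (Cfg L) ℂ :=
  fun s' s => if s' = s then (-1 : ℂ) ^ L * ∏ j, (if s j = 0 then (1 : ℂ) else -1) else 0

/-- The spin-parity operator `P` on `V^L`. -/
def Pop (L : ℕ) : V L →ₗ[ℂ] V L := Matrix.toEuclideanLin (Pmat L)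

/-- Spin flip on a single site. -/
def flip : Fin 2 → Fin 2 := fun x => if x = 0 then 1 else 0

/-- Matrix of the spin-reversal operator `R = σ^x_1 ⋯ σ^x_L`. -/
def Rrevmat (L : ℕ) : Matrix (Cfg L) (Cfg L) ℂ :=
  fun s' s => if (∀ j, s' j = flip (s j)) then 1 else 0

/-- The spin-reversal operator `R` on `V^L`. -/
def Rrev (L : ℕ) : V L →ₗ[ℂ] V L := Matrix.toEuclideanLin (Rrevmat L)

/-- Entries of the eight-vertex `R`-matrix with weights `a,b,c,d`.  In each pair the
first component is the auxiliary-space index, the second one the physical index;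
the first argument is the outgoing pair, the second the incoming pair.  In the
ordered basis `↑↑, ↑↓, ↓↑, ↓↓` its rows are `(a,0,0,d), (0,b,c,0), (0,c,b,0), (d,0,0,a)`. -/
def Rv (a b c d : ℂ) : Fin 2 × Fin 2 → Fin 2 × Fin 2 → ℂ := fun o i =>
  if o = i then (if o.1 = o.2 then a else b)
  else if o.1 = i.2 ∧ o.2 = i.1 ∧ i.1 ≠ i.2 then c
  else if o.1 = o.2 ∧ i.1 = i.2 ∧ o.1 ≠ i.1 then d
  else 0

/-- Matrix of the transfer matrix `T = tr₀(R₀L ⋯ R₀1)` of the eight-vertex model. -/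
def Tmat (a b c d : ℂ) (L : ℕ) : Matrix (Cfg L) (Cfg L) ℂ :=
  fun s' s => ∑ t : Cfg L, ∏ j : Fin L, Rv a b c d (t (cyc j), s' j) (t j, s j)

/-- The transfer matrix `T` of the eight-vertex model on `V^L`. -/
def Top (a b c d : ℂ) (L : ℕ) : V L →ₗ[ℂ] V L := Matrix.toEuclideanLin (Tmat a b c d L)

/-- Entries of the local supercharge `q(ζ) : ℂ² → ℂ² ⊗ ℂ²`, `q|↑⟩ = 0`,
`q|↓⟩ = |↑↑⟩ - ζ|↓↓⟩`; arguments: incoming spin, the two outgoing spins. -/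
def qloc (ζ : ℂ) (si o1 o2 : Fin 2) : ℂ :=
  if si = 1 then
    (if o1 = 0 ∧ o2 = 0 then 1 else if o1 = 1 ∧ o2 = 1 then -ζ else 0)
  else 0

/-- Position of site `k` of the original chain after insertion of one site at `j`. -/
def insIdx {L : ℕ} (j k : Fin L) : Fin (L + 1) :=
  if (k : ℕ) < (j : ℕ) then k.castSucc else k.succ

/-- Matrix of the local supercharge `q_j : V^L → V^{L+1}` acting on the `j`-th site
(`j : Fin L` corresponds to the paper's `j+1 ∈ {1,…,L}`). -/
def qjMat (ζ : ℂ) {L : ℕ} (j : Fin L) : Matrix (Cfg (L + 1)) (Cfg L) ℂ :=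
  fun s' s => qloc ζ (s j) (s' j.castSucc) (s' j.succ) *
    ∏ k ∈ Finset.univ.erase j, (if s' (insIdx j k) = s k then (1 : ℂ) else 0)

/-- Matrix of `∑_{j=0}^{L} (-1)^j q_j`, where `q_0 = S q_L`. -/
def QsumMat (ζ : ℂ) : (L : ℕ) → Matrix (Cfg (L + 1)) (Cfg L) ℂ
  | 0 => 0
  | (M + 1) =>
      Smat (M + 2) * qjMat ζ (Fin.last M) +
      ∑ j : Fin (M + 1), ((-1 : ℂ) ^ ((j : ℕ) + 1)) • qjMat ζ j

/-- The supercharge `Q(ζ) : V^L → V^{L+1}`: it acts as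
`√(L/(L+1)) ∑_{j=0}^L (-1)^j q_j` on the alternate-cyclic subspace `W^L` and as zero
on the other eigenspaces of the translation operator (equivalently, on the orthogonal
complement of `W^L`, since `S` is unitary). -/
def Qsc (ζ : ℝ) (L : ℕ) : V L →ₗ[ℂ] V (L + 1) :=
  (Real.sqrt ((L : ℝ) / ((L : ℝ) + 1)) : ℂ) •
    ((Matrix.toEuclideanLin (QsumMat (ζ : ℂ) L)) ∘ₗ
      ((W L).subtype ∘ₗ (W L).orthogonalProjectionOnto.toLinearMap))

/-- The adjoint supercharge `Q(ζ)† : V^L → V^{L-1}`. -/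
def Qadj (ζ : ℝ) : (L : ℕ) → (V L →ₗ[ℂ] V (L - 1))
  | 0 => 0
  | (K + 1) => LinearMap.adjoint (Qsc ζ K)

/-- Number of down spins of a configuration. -/
def nDown {L : ℕ} (s : Cfg L) : ℕ := (Finset.univ.filter fun j => s j = 1).card

/-- The state `Φ_n(ζ) = ∑_{m=0}^{n} ζ^m ∑_{x₁<⋯<x_{2m+1}} ||x₁,…,x_{2m+1}⟩⟩`. -/
def Phi (ζ : ℝ) (n : ℕ) : V (2 * n + 1) :=
  ∑ s : Cfg (2 * n + 1),
    (if nDown s % 2 = 1 then ((ζ : ℂ) ^ (nDown s / 2)) else 0) • bs s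

/-- The state `Φ̄_n(ζ) = ∑_{m=0}^{n} ζ^m ∑_{x₁<⋯<x_{2m}} ||x₁,…,x_{2m}⟩⟩`. -/
def PhiBar (ζ : ℝ) (n : ℕ) : V (2 * n + 1) :=
  ∑ s : Cfg (2 * n + 1),
    (if nDown s % 2 = 0 then ((ζ : ℂ) ^ (nDown s / 2)) else 0) • bs s

/-- Proposition 3.5.  Let `(A_L)` be a family of operators with
`A_{L+1} Q = λ Q A_L` (`λ ≠ 0`).  If `Ψ ∈ W^L` (`L = K+1 ≥ 2`) is a zero-energy state,
`QΨ = 0 = Q†Ψ`, with decompositions `Ψ = Φ + Qα` (`QΦ = 0`, `α ∈ W^{L-1}`) and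
`Ψ = Φ' + Q†β` (`Q†Φ' = 0`, `β ∈ W^{L+1}`), then `⟨Ψ|A_L Ψ⟩ = ⟨Φ'|A_L Φ⟩`. -/
theorem statement6 (ζ : ℝ) (hζ : ζ ≠ 0) (lam : ℂ) (hlam : lam ≠ 0)
    (A : (L : ℕ) → (V L →ₗ[ℂ] V L))
    (hA : ∀ L : ℕ, A (L + 1) ∘ₗ Qsc ζ L = lam • (Qsc ζ L ∘ₗ A L))
    (K : ℕ) (hK : 1 ≤ K)
    (Ψ Φ Φ' : V (K + 1)) (α : V K) (β : V (K + 2))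
    (hΨW : Ψ ∈ W (K + 1))
    (hQΨ : Qsc ζ (K + 1) Ψ = 0) (hQdΨ : Qadj ζ (K + 1) Ψ = 0)
    (hΦ : Qsc ζ (K + 1) Φ = 0) (hα : α ∈ W K)
    (hdec : Ψ = Φ + Qsc ζ K α)
    (hΦ' : Qadj ζ (K + 1) Φ' = 0) (hβ : β ∈ W (K + 2))
    (hdec' : Ψ - Φ' = Qadj ζ (K + 2) β) :
    (inner ℂ Ψ (A (K + 1) Ψ) : ℂ) = inner ℂ Φ' (A (K + 1) Φ) := by
  have hQAΦ : Qsc ζ (K + 1) (A (K + 1) Φ) = 0 := by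
    have h1 := congrArg (fun f : V (K + 1) →ₗ[ℂ] V (K + 2) => f Φ) (hA (K + 1))
    simp only [LinearMap.comp_apply, LinearMap.smul_apply, hΦ, map_zero] at h1
    rcases smul_eq_zero.mp h1.symm with h | h
    · exact absurd h hlam
    · exact h
  have hΨeq : Ψ = Φ' + LinearMap.adjoint (Qsc ζ (K + 1)) β := by
    have : Qadj ζ (K + 2) β = LinearMap.adjoint (Qsc ζ (K + 1)) β := rfl
    rw [← this, ← hdec']; abel
  have hadjΨ : LinearMap.adjoint (Qsc ζ K) Ψ = 0 := hQdΨ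
  have hterm1 : (inner ℂ Ψ (A (K + 1) (Qsc ζ K α)) : ℂ) = 0 := by
    have h2 := congrArg (fun f : V K →ₗ[ℂ] V (K + 1) => f α) (hA K)
    simp only [LinearMap.comp_apply, LinearMap.smul_apply] at h2
    rw [h2, inner_smul_right, ← LinearMap.adjoint_inner_left, hadjΨ, inner_zero_left,
      mul_zero]
  have hterm2 : (inner ℂ (LinearMap.adjoint (Qsc ζ (K + 1)) β) (A (K + 1) Φ) : ℂ) = 0 := by
    rw [LinearMap.adjoint_inner_left, hQAΦ, inner_zero_right]
  calc (inner ℂ Ψ (A (K + 1) Ψ) : ℂ)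
      = inner ℂ Ψ (A (K + 1) Φ) + inner ℂ Ψ (A (K + 1) (Qsc ζ K α)) := by
        rw [show A (K+1) Ψ = A (K+1) Φ + A (K+1) (Qsc ζ K α) from by rw [hdec, map_add],
          inner_add_right]
    _ = inner ℂ Ψ (A (K + 1) Φ) := by rw [hterm1, add_zero]
    _ = inner ℂ Φ' (A (K + 1) Φ) +
        inner ℂ (LinearMap.adjoint (Qsc ζ (K + 1)) β) (A (K + 1) Φ) := by
        rw [hΨeq, inner_add_left]
    _ = inner ℂ Φ' (A (K + 1) Φ) := by rw [hterm2, add_zero]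

end EightVertex
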